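/- Let u, w : ℝ × ℝ → ℝ be continuously differentiable functions satisfying the incompressibility condition ∂u/∂x(x, z) + ∂w/∂z(x, z) = 0 for all (x, z), and the no-penetration condition w(x, 0) = 0 for all x. Let h : ℝ → ℝ be differentiable at a point x₀. Then the function x ↦ ∫₀^{h(x)} u(x, z) dz is differentiable at x₀ with derivative u(x₀, h(x₀))·h'(x₀) − w(x₀, h(x₀)). -/

import Mathlib

open intervalIntegral Set MeasureTheory

theorem stmt_8 (u w : ℝ × ℝ → ℝ) (hu : ContDiff ℝ 1 u) (hw : ContDiff ℝ 1 w)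
    (hincomp : ∀ x z : ℝ,
      deriv (fun x' => u (x', z)) x + deriv (fun z' => w (x, z')) z = 0)
    (hnopen : ∀ x : ℝ, w (x, 0) = 0)
    (h : ℝ → ℝ) (x₀ : ℝ) (hh : DifferentiableAt ℝ h x₀) :
    HasDerivAt (fun x => ∫ z in (0:ℝ)..(h x), u (x, z))
      (u (x₀, h x₀) * deriv h x₀ - w (x₀, h x₀)) x₀ := by
  have hu_cont : Continuous u := hu.continuous
  have hw_cont : Continuous w := hw.continuous
  -- partial derivatives
  have hdu : ∀ p : ℝ × ℝ, HasDerivAt (fun x' => u (x', p.2)) (fderiv ℝ u p (1, 0)) p.1 := by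
    intro p
    have hdiff := (hu.differentiable one_ne_zero p).hasFDerivAt
    have hcur : HasDerivAt (fun x' : ℝ => (x', p.2)) ((1:ℝ), (0:ℝ)) p.1 :=
      (hasDerivAt_id p.1).prodMk (hasDerivAt_const p.1 p.2)
    exact hdiff.comp_hasDerivAt p.1 hcur
  have hdw : ∀ p : ℝ × ℝ, HasDerivAt (fun z' => w (p.1, z')) (fderiv ℝ w p (0, 1)) p.2 := by
    intro p
    have hdiff := (hw.differentiable one_ne_zero p).hasFDerivAt
    have hcur : HasDerivAt (fun z' : ℝ => (p.1, z')) ((0:ℝ), (1:ℝ)) p.2 :=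
      (hasDerivAt_const p.2 p.1).prodMk (hasDerivAt_id p.2)
    exact hdiff.comp_hasDerivAt p.2 hcur
  have hdu_cont : Continuous fun p : ℝ × ℝ => fderiv ℝ u p (1, 0) :=
    (hu.continuous_fderiv_apply one_ne_zero).comp
      ((continuous_id.prodMk continuous_const : Continuous fun p : ℝ × ℝ => (p, ((1:ℝ), (0:ℝ)))))
  have hdw_cont : Continuous fun p : ℝ × ℝ => fderiv ℝ w p (0, 1) :=
    (hw.continuous_fderiv_apply one_ne_zero).comp
      ((continuous_id.prodMk continuous_const : Continuous fun p : ℝ × ℝ => (p, ((0:ℝ), (1:ℝ)))))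
  -- differentiation under the integral sign
  have key : ∀ x₁ y : ℝ, HasDerivAt (fun x => ∫ z in (0:ℝ)..y, u (x, z)) (-w (x₁, y)) x₁ := by
    intro x₁ y
    obtain ⟨M, hM⟩ := ((isCompact_closedBall x₁ 1).prod isCompact_uIcc).exists_bound_of_continuousOn
      (hdu_cont.continuousOn (s := Metric.closedBall x₁ 1 ×ˢ uIcc (0:ℝ) y))
    have main := intervalIntegral.hasDerivAt_integral_of_dominated_loc_of_deriv_le
      (F := fun x z => u (x, z)) (F' := fun x z => fderiv ℝ u (x, z) (1, 0))
      (x₀ := x₁) (a := (0:ℝ)) (b := y) (bound := fun _ => M) (μ := volume) (s := Metric.ball x₁ 1) (Metric.ball_mem_nhds x₁ one_pos)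
      (Filter.Eventually.of_forall fun x =>
        ((hu_cont.comp (continuous_const.prodMk continuous_id)).aestronglyMeasurable))
      ((hu_cont.comp (continuous_const.prodMk continuous_id)).intervalIntegrable 0 y)
      ((hdu_cont.comp (continuous_const.prodMk continuous_id)).aestronglyMeasurable)
      (Filter.Eventually.of_forall fun z hz x hx => by
        have := hM (x, z) ⟨Metric.ball_subset_closedBall hx, uIoc_subset_uIcc hz⟩
        simpa using this)
      (intervalIntegrable_const)
      (Filter.Eventually.of_forall fun z hz x hx => hdu (x, z))
    have heq : (∫ z in (0:ℝ)..y, fderiv ℝ u (x₁, z) (1, 0)) = -w (x₁, y) := by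
      have h1 : (∫ z in (0:ℝ)..y, fderiv ℝ u (x₁, z) (1, 0))
          = ∫ z in (0:ℝ)..y, -(fderiv ℝ w (x₁, z) (0, 1)) := by
        apply intervalIntegral.integral_congr
        intro z _
        show fderiv ℝ u (x₁, z) (1, 0) = -(fderiv ℝ w (x₁, z) (0, 1))
        have e1 := (hdu (x₁, z)).deriv
        have e2 := (hdw (x₁, z)).deriv
        have h3 := hincomp x₁ z
        rw [e1, e2] at h3
        linarith
      have h2 : (∫ z in (0:ℝ)..y, fderiv ℝ w (x₁, z) (0, 1)) = w (x₁, y) - w (x₁, 0) :=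
        intervalIntegral.integral_eq_sub_of_hasDerivAt (f := fun z' => w (x₁, z'))
          (f' := fun z => fderiv ℝ w (x₁, z) (0, 1)) (fun z _ => hdw (x₁, z))
          ((hdw_cont.comp (continuous_const.prodMk continuous_id)).intervalIntegrable 0 y)
      rw [h1, intervalIntegral.integral_neg, h2, hnopen x₁]
      ring
    rw [← heq]
    exact main.2
  -- the identity: ∫₀^y u(x,z) dz = ∫₀^y u(x₀,z) dz - ∫_{x₀}^x w(s,y) ds
  have ident : ∀ x y : ℝ, (∫ z in (0:ℝ)..y, u (x, z))
      = (∫ z in (0:ℝ)..y, u (x₀, z)) - ∫ s in x₀..x, w (s, y) := by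
    intro x y
    set φ : ℝ → ℝ := fun x => (∫ z in (0:ℝ)..y, u (x, z)) + ∫ s in x₀..x, w (s, y) with hφ
    have hφd : ∀ x₁, HasDerivAt φ 0 x₁ := by
      intro x₁
      have h2 : HasDerivAt (fun x => ∫ s in x₀..x, w (s, y)) (w (x₁, y)) x₁ :=
        ((hw_cont.comp (continuous_id.prodMk continuous_const)).integral_hasStrictDerivAt
          x₀ x₁).hasDerivAt
      have := (key x₁ y).add h2
      rw [neg_add_cancel] at this
      exact this
    have hconst : φ x = φ x₀ :=
      is_const_of_deriv_eq_zero (fun x => (hφd x).differentiableAt) (fun x => (hφd x).deriv) x x₀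
    have : (∫ z in (0:ℝ)..y, u (x, z)) + ∫ s in x₀..x, w (s, y)
        = (∫ z in (0:ℝ)..y, u (x₀, z)) + ∫ s in x₀..x₀, w (s, y) := hconst
    rw [intervalIntegral.integral_same] at this
    linarith
  -- part A
  have hA : HasDerivAt (fun x => ∫ z in (0:ℝ)..h x, u (x₀, z)) (u (x₀, h x₀) * deriv h x₀) x₀ := by
    have hFTC : HasDerivAt (fun y => ∫ z in (0:ℝ)..y, u (x₀, z)) (u (x₀, h x₀)) (h x₀) :=
      ((hu_cont.comp (continuous_const.prodMk continuous_id)).integral_hasStrictDerivAt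
        0 (h x₀)).hasDerivAt
    exact hFTC.comp x₀ hh.hasDerivAt
  -- part B
  have hB : HasDerivAt (fun x => ∫ s in x₀..x, w (s, h x)) (w (x₀, h x₀)) x₀ := by
    rw [hasDerivAt_iff_isLittleO, Asymptotics.isLittleO_iff]
    intro ε hε
    obtain ⟨δ, hδpos, hδ⟩ := Metric.continuousAt_iff.mp (hw_cont.continuousAt
      (x := (x₀, h x₀))) ε hε
    filter_upwards [Metric.tendsto_nhds.mp hh.continuousAt.tendsto δ hδpos,
      Metric.ball_mem_nhds x₀ hδpos] with x hx1 hx2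
    have hint : IntervalIntegrable (fun s => w (s, h x)) volume x₀ x :=
      (hw_cont.comp (continuous_id.prodMk continuous_const)).intervalIntegrable x₀ x
    have e0 : (∫ s in x₀..x₀, w (s, h x₀)) = 0 := intervalIntegral.integral_same
    have e1 : (∫ s in x₀..x, w (s, h x)) - (x - x₀) • w (x₀, h x₀)
        = ∫ s in x₀..x, (w (s, h x) - w (x₀, h x₀)) := by
      rw [intervalIntegral.integral_sub hint (intervalIntegrable_const),
        intervalIntegral.integral_const]
    have hbound : ∀ s ∈ uIoc x₀ x, ‖w (s, h x) - w (x₀, h x₀)‖ ≤ ε := by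
      intro s hs
      have hds : dist s x₀ ≤ dist x x₀ := by
        have := Real.dist_le_of_mem_uIcc (uIoc_subset_uIcc hs) (left_mem_uIcc (a := x₀) (b := x))
        simpa [dist_comm] using this
      have hdp : dist (s, h x) (x₀, h x₀) < δ := by
        rw [Prod.dist_eq]
        exact max_lt (lt_of_le_of_lt hds (by simpa [Metric.mem_ball] using hx2)) hx1
      have := hδ hdp
      rw [Real.dist_eq] at this
      exact le_of_lt (by simpa [Real.norm_eq_abs] using this)
    calc ‖(∫ s in x₀..x, w (s, h x)) - (∫ s in x₀..x₀, w (s, h x₀))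
          - (x - x₀) • w (x₀, h x₀)‖
        = ‖∫ s in x₀..x, (w (s, h x) - w (x₀, h x₀))‖ := by rw [e0, sub_zero, e1]
      _ ≤ ε * |x - x₀| := intervalIntegral.norm_integral_le_of_norm_le_const hbound
      _ = ε * ‖x - x₀‖ := by rw [Real.norm_eq_abs]
  -- combine
  have hfun : (fun x => ∫ z in (0:ℝ)..h x, u (x, z))
      = fun x => (∫ z in (0:ℝ)..h x, u (x₀, z)) - ∫ s in x₀..x, w (s, h x) :=
    funext fun x => ident x (h x)
  rw [hfun]
  exact hA.sub hB
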